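/- arXiv:2212.01656 — 4 statements merged into one kernel-verified Lean document; each statement's English description precedes it below -/
import Mathlib

section
/- Let (Ω,F,P) be a probability space carrying random variables Θ, Φ_1,…,Φ_N with values in Polish spaces such that Θ is independent of (Φ_1,…,Φ_N), and let Ψ be a random variable that is σ(Φ_i, Θ)-measurable for some fixed i. Then (Φ_1,…,Φ_N) and Ψ are conditionally independent given Φ_i. -/
open MeasureTheory ProbabilityTheory

lemma aux_rw {Ω α : Type*} (f : Ω → α) (s : Set α) :
    (fun ω => s.indicator (fun _ => (1:ℝ)) (f ω))
      = (f ⁻¹' s).indicator (fun _ => (1:ℝ)) := by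
  funext ω
  by_cases h : f ω ∈ s <;> simp [Set.indicator_apply, Set.mem_preimage, h]

lemma aux_int {Ω α : Type*} [MeasurableSpace Ω] [MeasurableSpace α]
    (P : Measure Ω) [IsFiniteMeasure P]
    {f : Ω → α} (hf : Measurable f) {s : Set α} (hs : MeasurableSet s) :
    Integrable (fun ω => s.indicator (fun _ => (1:ℝ)) (f ω)) P := by
  rw [aux_rw]
  exact (integrable_const (1:ℝ)).indicator (hf hs)

lemma aux_bdd {α : Type*} (s : Set α) (x : α) :
    ‖s.indicator (fun _ => (1:ℝ)) x‖ ≤ 1 := by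
  by_cases hx : x ∈ s <;> simp [Set.indicator_apply, hx]

/-- Key lemma: if `Θ ⟂ X`, then `E[1_C(X,Θ) | σ(X)] = (ν (Prod.mk (X ω) ⁻¹' C)).toReal`
where `ν` is the law of `Θ`. -/
lemma key_condExp {Ω V T : Type*} [MeasurableSpace Ω] [MeasurableSpace V] [MeasurableSpace T]
    (P : Measure Ω) [IsProbabilityMeasure P] {X : Ω → V} {Θ : Ω → T}
    (hX : Measurable X) (hΘ : Measurable Θ) (hind : IndepFun Θ X P)
    {C : Set (V × T)} (hC : MeasurableSet C) :
    (fun ω => ((P.map Θ) (Prod.mk (X ω) ⁻¹' C)).toReal)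
      =ᵐ[P] condExp (MeasurableSpace.comap X inferInstance) P
        (fun ω => C.indicator (fun _ => (1:ℝ)) (X ω, Θ ω)) := by
  have hm : MeasurableSpace.comap X inferInstance ≤ ‹MeasurableSpace Ω› := hX.comap_le
  haveI : SigmaFinite (P.trim hm) := by
    have : IsFiniteMeasure (P.trim hm) := isFiniteMeasure_trim hm
    infer_instance
  set ν : Measure T := P.map Θ with hν
  haveI : IsProbabilityMeasure ν := Measure.isProbabilityMeasure_map hΘ.aemeasurable
  set μX : Measure V := P.map X with hμX
  haveI : IsProbabilityMeasure μX := Measure.isProbabilityMeasure_map hX.aemeasurable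
  have hmap : P.map (fun ω => (X ω, Θ ω)) = μX.prod ν :=
    (indepFun_iff_map_prod_eq_prod_map_map hX.aemeasurable hΘ.aemeasurable).mp hind.symm
  have hgV : Measurable (fun v => (ν (Prod.mk v ⁻¹' C)).toReal) :=
    (measurable_measure_prodMk_left hC).ennreal_toReal
  have hY : Measurable (fun ω => (X ω, Θ ω)) := hX.prodMk hΘ
  refine ae_eq_condExp_of_forall_setIntegral_eq hm (aux_int P hY hC) ?_ ?_ ?_
  · intro s _ _
    refine Integrable.integrableOn ?_
    refine Integrable.mono' (integrable_const (1:ℝ))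
      (hgV.comp hX).aestronglyMeasurable ?_
    filter_upwards with ω
    rw [Real.norm_eq_abs, abs_of_nonneg ENNReal.toReal_nonneg]
    exact ENNReal.toReal_le_of_le_ofReal one_pos.le (by simpa using prob_le_one)
  · intro s hs _
    obtain ⟨D, hD, rfl⟩ := hs
    -- RHS: integral of the indicator
    have hR : ∫ x in X ⁻¹' D, C.indicator (fun _ => (1:ℝ)) (X x, Θ x) ∂P
        = (P (X ⁻¹' D ∩ (fun ω => (X ω, Θ ω)) ⁻¹' C)).toReal := by
      rw [show (fun x => C.indicator (fun _ => (1:ℝ)) (X x, Θ x))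
            = ((fun ω => (X ω, Θ ω)) ⁻¹' C).indicator (fun _ => (1:ℝ)) from
          aux_rw (fun ω => (X ω, Θ ω)) C]
      rw [setIntegral_indicator (hY hC), setIntegral_const]
      simp [measureReal_def]
    rw [hR]
    -- the intersection as a preimage under the pair map
    have hset : X ⁻¹' D ∩ (fun ω => (X ω, Θ ω)) ⁻¹' C
        = (fun ω => (X ω, Θ ω)) ⁻¹' ((D ×ˢ Set.univ) ∩ C) := by
      ext ω; simp [Set.mem_prod]
    rw [hset, ← Measure.map_apply hY ((hD.prod MeasurableSet.univ).inter hC), hmap,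
      Measure.prod_apply ((hD.prod MeasurableSet.univ).inter hC)]
    -- LHS: change of variables and toReal of a lintegral
    have hL : ∫ x in X ⁻¹' D, (ν (Prod.mk (X x) ⁻¹' C)).toReal ∂P
        = ∫ v in D, (ν (Prod.mk v ⁻¹' C)).toReal ∂μX := by
      rw [hμX, setIntegral_map hD hgV.aestronglyMeasurable hX.aemeasurable]
    rw [hL]
    have hlt : ∀ᵐ v ∂(μX.restrict D), ν (Prod.mk v ⁻¹' C) < ⊤ :=
      Filter.Eventually.of_forall fun v => (measure_lt_top ν _)
    rw [integral_toReal ((measurable_measure_prodMk_left hC).aemeasurable) hlt]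
    congr 1
    rw [← lintegral_indicator hD]
    congr 1
    funext v
    by_cases hv : v ∈ D
    · have : Prod.mk v ⁻¹' ((D ×ˢ Set.univ) ∩ C) = Prod.mk v ⁻¹' C := by
        ext t; simp [hv]
      simp [this, Set.indicator_apply, hv]
    · have : Prod.mk v ⁻¹' ((D ×ˢ Set.univ) ∩ C) = ∅ := by
        ext t; simp [hv]
      simp [this, Set.indicator_apply, hv]
  · exact ((hgV.comp (Measurable.of_comap_le le_rfl)).stronglyMeasurable).aestronglyMeasurable

/-- If `Θ` is independent of `(Φ_1,…,Φ_N)` and `Ψ` is `σ(Φ_i, Θ)`-measurable,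
then `(Φ_1,…,Φ_N)` and `Ψ` are conditionally independent given `Φ_i`:
`E[1_A(Φ)·1_B(Ψ) | Φ_i] = E[1_A(Φ) | Φ_i]·E[1_B(Ψ) | Φ_i]` a.s., for all measurable `A, B`. -/
theorem stmt_5 {Ω S T U : Type*} [MeasurableSpace Ω] [MeasurableSpace S]
    [MeasurableSpace T] [MeasurableSpace U]
    (P : Measure Ω) [IsProbabilityMeasure P]
    {N : ℕ} (Φ : Fin N → Ω → S) (Θ : Ω → T) (Ψ : Ω → U)
    (hΦ : ∀ i, Measurable (Φ i)) (hΘ : Measurable Θ)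
    (hind : IndepFun Θ (fun ω (i : Fin N) => Φ i ω) P)
    (i : Fin N)
    (hΨ : Measurable[MeasurableSpace.comap (fun ω => (Φ i ω, Θ ω)) inferInstance] Ψ)
    {A : Set (Fin N → S)} (hA : MeasurableSet A)
    {B : Set U} (hB : MeasurableSet B) :
    condExp (MeasurableSpace.comap (Φ i) inferInstance) P
        (fun ω => A.indicator (fun _ => (1:ℝ)) (fun j => Φ j ω)
          * B.indicator (fun _ => (1:ℝ)) (Ψ ω))
      =ᵐ[P]
    fun ω =>
      (condExp (MeasurableSpace.comap (Φ i) inferInstance) P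
        (fun ω => A.indicator (fun _ => (1:ℝ)) (fun j => Φ j ω)) ω)
      * (condExp (MeasurableSpace.comap (Φ i) inferInstance) P
        (fun ω => B.indicator (fun _ => (1:ℝ)) (Ψ ω)) ω) := by
  have hΦv : Measurable (fun ω (j : Fin N) => Φ j ω) := measurable_pi_lambda _ hΦ
  have hmΦ : MeasurableSpace.comap (fun ω (j : Fin N) => Φ j ω) inferInstance
      ≤ ‹MeasurableSpace Ω› := hΦv.comap_le
  have hm_le : MeasurableSpace.comap (Φ i) inferInstance
      ≤ MeasurableSpace.comap (fun ω (j : Fin N) => Φ j ω) inferInstance := by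
    rw [show Φ i = (fun v : Fin N → S => v i) ∘ (fun ω (j : Fin N) => Φ j ω) from rfl,
      ← MeasurableSpace.comap_comp]
    exact MeasurableSpace.comap_mono (measurable_pi_apply i).comap_le
  have hm : MeasurableSpace.comap (Φ i) inferInstance ≤ ‹MeasurableSpace Ω› :=
    hm_le.trans hmΦ
  haveI : SigmaFinite (P.trim hm) := by
    have : IsFiniteMeasure (P.trim hm) := isFiniteMeasure_trim hm
    infer_instance
  haveI : SigmaFinite (P.trim hmΦ) := by
    have : IsFiniteMeasure (P.trim hmΦ) := isFiniteMeasure_trim hmΦ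
    infer_instance
  haveI : IsProbabilityMeasure (P.map Θ) := Measure.isProbabilityMeasure_map hΘ.aemeasurable
  -- extract C from the comap-measurability of Ψ
  obtain ⟨C, hC, hCeq⟩ := hΨ hB
  set Cp : Set ((Fin N → S) × T) := (fun p : (Fin N → S) × T => (p.1 i, p.2)) ⁻¹' C
    with hCp_def
  have hCp : MeasurableSet Cp :=
    (((measurable_pi_apply i).comp measurable_fst).prodMk measurable_snd) hC
  -- the indicator of B ∘ Ψ equals the indicator of Cp ∘ (Φv, Θ)
  have hGeq : (fun ω => B.indicator (fun _ => (1:ℝ)) (Ψ ω))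
      = fun ω => Cp.indicator (fun _ => (1:ℝ)) ((fun j => Φ j ω), Θ ω) := by
    funext ω
    have hmem : Ψ ω ∈ B ↔ ((fun j => Φ j ω), Θ ω) ∈ Cp := by
      have h2 : ω ∈ (fun ω => (Φ i ω, Θ ω)) ⁻¹' C ↔ ω ∈ Ψ ⁻¹' B := by rw [hCeq]
      simpa [hCp_def, Set.mem_preimage] using h2.symm
    by_cases h : Ψ ω ∈ B
    · rw [Set.indicator_of_mem h, Set.indicator_of_mem (hmem.mp h)]
    · rw [Set.indicator_of_notMem h,
        Set.indicator_of_notMem (fun hh => h (hmem.mpr hh))]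
  set h : S → ℝ := fun s => ((P.map Θ) (Prod.mk s ⁻¹' C)).toReal with hh_def
  have hh : Measurable h := (measurable_measure_prodMk_left hC).ennreal_toReal
  have hbd : ∀ x : Ω, ‖h (Φ i x)‖ ≤ 1 := by
    intro x
    rw [hh_def, Real.norm_eq_abs, abs_of_nonneg ENNReal.toReal_nonneg]
    exact ENNReal.toReal_le_of_le_ofReal one_pos.le (by simpa using prob_le_one)
  -- the key conditional expectation computation
  have hkey0 := key_condExp P hΦv hΘ hind hCp
  have hHrw : (fun ω => ((P.map Θ) (Prod.mk ((fun j => Φ j ω)) ⁻¹' Cp)).toReal)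
      = fun ω => h (Φ i ω) := by
    funext ω
    rfl
  have hkey : (fun ω => h (Φ i ω))
      =ᵐ[P] condExp (MeasurableSpace.comap (fun ω (j : Fin N) => Φ j ω) inferInstance) P
        (fun ω => Cp.indicator (fun _ => (1:ℝ)) ((fun j => Φ j ω), Θ ω)) := by
    rw [← hHrw]; exact hkey0
  -- various functions and their properties
  set F : Ω → ℝ := fun ω => A.indicator (fun _ => (1:ℝ)) (fun j => Φ j ω) with hF_def
  set G : Ω → ℝ := fun ω => Cp.indicator (fun _ => (1:ℝ)) ((fun j => Φ j ω), Θ ω)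
    with hG_def
  have hYm : Measurable (fun ω => ((fun j => Φ j ω), Θ ω)) := hΦv.prodMk hΘ
  have hFint : Integrable F P := aux_int P hΦv hA
  have hGint : Integrable G P := aux_int P hYm hCp
  have hF_sm : StronglyMeasurable[MeasurableSpace.comap
      (fun ω (j : Fin N) => Φ j ω) inferInstance] F := by
    rw [hF_def, aux_rw (fun ω (j : Fin N) => Φ j ω) A]
    exact stronglyMeasurable_const.indicator ⟨A, hA, rfl⟩
  have hF_meas : Measurable F := by
    rw [hF_def, aux_rw (fun ω (j : Fin N) => Φ j ω) A]
    exact measurable_const.indicator (hΦv hA)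
  have hhΦi_m : Measurable[MeasurableSpace.comap (Φ i) inferInstance]
      (fun ω => h (Φ i ω)) := hh.comp (Measurable.of_comap_le le_rfl)
  have hhΦi_int : Integrable (fun ω => h (Φ i ω)) P := by
    refine Integrable.mono' (integrable_const (1:ℝ))
      ((hh.comp (hΦ i)).aestronglyMeasurable) ?_
    filter_upwards with ω using hbd ω
  have hFGint : Integrable (fun ω => F ω * G ω) P :=
    hGint.bdd_mul hF_meas.aestronglyMeasurable (Filter.Eventually.of_forall fun x => aux_bdd A _)
  have hFhint : Integrable (fun ω => h (Φ i ω) * F ω) P :=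
    hFint.bdd_mul (hh.comp (hΦ i)).aestronglyMeasurable (Filter.Eventually.of_forall hbd)
  -- step 1 : condExp of G given m
  have e4 : condExp (MeasurableSpace.comap (Φ i) inferInstance) P G
      =ᵐ[P] fun ω => h (Φ i ω) := by
    have t1 := (condExp_condExp_of_le (μ := P) (f := G) hm_le hmΦ).symm
    have t2 := condExp_congr_ae (m := MeasurableSpace.comap (Φ i) inferInstance)
      (μ := P) hkey.symm
    have t3 : condExp (MeasurableSpace.comap (Φ i) inferInstance) P
        (fun ω => h (Φ i ω)) = fun ω => h (Φ i ω) :=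
      condExp_of_stronglyMeasurable hm hhΦi_m.stronglyMeasurable hhΦi_int
    exact t1.trans (t2.trans (by rw [t3]))
  -- step 2 : condExp of F * G given m
  have e1 : condExp (MeasurableSpace.comap (fun ω (j : Fin N) => Φ j ω) inferInstance) P
        (fun ω => F ω * G ω)
      =ᵐ[P] fun ω => F ω * h (Φ i ω) := by
    have p1 : condExp (MeasurableSpace.comap (fun ω (j : Fin N) => Φ j ω) inferInstance)
        P (F * G) =ᵐ[P] F * condExp (MeasurableSpace.comap
          (fun ω (j : Fin N) => Φ j ω) inferInstance) P G :=
      condExp_mul_of_stronglyMeasurable_left hF_sm (by exact hFGint) hGint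
    refine p1.trans ?_
    filter_upwards [hkey] with ω hω
    simp only [Pi.mul_apply]
    rw [← hω]
  have e2 : condExp (MeasurableSpace.comap (Φ i) inferInstance) P (fun ω => F ω * G ω)
      =ᵐ[P] condExp (MeasurableSpace.comap (Φ i) inferInstance) P
        (fun ω => F ω * h (Φ i ω)) := by
    have t1 := (condExp_condExp_of_le (μ := P) (f := fun ω => F ω * G ω) hm_le hmΦ).symm
    exact t1.trans (condExp_congr_ae e1)
  have e3 : condExp (MeasurableSpace.comap (Φ i) inferInstance) P
        (fun ω => F ω * h (Φ i ω))
      =ᵐ[P] fun ω => h (Φ i ω)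
        * condExp (MeasurableSpace.comap (Φ i) inferInstance) P F ω := by
    have hcomm : (fun ω => F ω * h (Φ i ω)) = (fun ω => h (Φ i ω)) * F := by
      funext ω; simp [mul_comm]
    rw [hcomm]
    exact condExp_mul_of_stronglyMeasurable_left hhΦi_m.stronglyMeasurable
      (by exact hFhint) hFint
  -- assemble
  have main : condExp (MeasurableSpace.comap (Φ i) inferInstance) P (fun ω => F ω * G ω)
      =ᵐ[P] fun ω => condExp (MeasurableSpace.comap (Φ i) inferInstance) P F ω
        * condExp (MeasurableSpace.comap (Φ i) inferInstance) P G ω := by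
    refine (e2.trans e3).trans ?_
    filter_upwards [e4] with ω hω
    rw [hω, mul_comm]
  have hprod : (fun ω => A.indicator (fun _ => (1:ℝ)) (fun j => Φ j ω)
      * B.indicator (fun _ => (1:ℝ)) (Ψ ω)) = fun ω => F ω * G ω := by
    funext ω
    rw [congrFun hGeq ω]
  rw [hprod, hGeq]
  exact main
end

section
/- Let X, Γ be finite sets, Z = [0,1] with the uniform measure ν, and Ψ : X × P(X) × Γ × Z → X a measurable map satisfying: for all x, γ and all m, m̃ ∈ P(X), ν({z : Ψ(x,m,γ,z) ≠ Ψ(x,m̃,γ,z)}) ≤ w(dist(m,m̃)) for a nondecreasing w : [0,∞) → [0,1]. Let ρ be a probability measure on a finite set R of functions φ : X → Γ. Define q(p) ∈ P(X) as the law of Ψ(y, p, φ(y), z) where (y, φ, z) ∼ p ⊗ ρ ⊗ ν. Then for all p, p̃ ∈ P(X): dist(q(p), q(p̃)) ≤ w(dist(p,p̃)) + dist(p,p̃). Consequently, if w(s) → 0 as s → 0+, then q : P(X) → P(X) is continuous for the total variation metric. -/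
open MeasureTheory Filter

/-- Total variation metric on (probability vectors over) a finite set. -/
noncomputable def tv {X : Type*} [Fintype X] (m m' : X → ℝ) : ℝ :=
  (1/2 : ℝ) * ∑ e, |m e - m' e|

/-- Probability vectors over a finite set. -/
def IsProb {X : Type*} [Fintype X] (m : X → ℝ) : Prop :=
  (∀ e, 0 ≤ m e) ∧ ∑ e, m e = 1

lemma tv_nonneg {X : Type*} [Fintype X] (m m' : X → ℝ) : 0 ≤ tv m m' :=
  mul_nonneg (by norm_num) (Finset.sum_nonneg fun _ _ => abs_nonneg _)

section Aux
variable {X : Type*} [Fintype X] [MeasurableSpace X] [MeasurableSingletonClass X]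

lemma sum_meas_inter (ν : Measure ℝ) (g : ℝ → X) (hg : Measurable g)
    (E : Set ℝ) (hE : MeasurableSet E) :
    ∑ b, ν ({z | g z = b} ∩ E) = ν E := by
  have : Countable X := Finite.to_countable
  rw [← tsum_fintype (L := SummationFilter.unconditional _), ← measure_iUnion]
  · congr 1
    ext z
    simp
  · intro b b' hbb'
    apply Set.disjoint_left.mpr
    rintro z ⟨hz1, _⟩ ⟨hz2, _⟩
    exact hbb' (hz1.symm.trans hz2)
  · intro b
    exact (hg (measurableSet_singleton b)).inter hE

lemma diff_bound (ν : Measure ℝ) [IsFiniteMeasure ν] (g g' : ℝ → X)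
    (hg : Measurable g) (hg' : Measurable g') :
    ∑ b, |(ν {z | g z = b}).toReal - (ν {z | g' z = b}).toReal|
      ≤ 2 * (ν {z | g z ≠ g' z}).toReal := by
  set D := {z | g z ≠ g' z} with hD
  have hDm : MeasurableSet D := by
    have hcompl : Dᶜ = ⋃ b, ({z | g z = b} ∩ {z | g' z = b}) := by
      ext z
      simp only [hD, Set.mem_compl_iff, Set.mem_setOf_eq, not_not, Set.mem_iUnion,
        Set.mem_inter_iff]
      constructor
      · intro h; exact ⟨g z, rfl, h.symm⟩
      · rintro ⟨b, h1, h2⟩; exact h1.trans h2.symm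
    rw [← compl_compl D, hcompl]
    exact (MeasurableSet.iUnion fun b =>
      ((hg (measurableSet_singleton b)).inter (hg' (measurableSet_singleton b)))).compl
  have key : ∀ b, |(ν {z | g z = b}).toReal - (ν {z | g' z = b}).toReal|
      ≤ (ν ({z | g z = b} ∩ D)).toReal + (ν ({z | g' z = b} ∩ D)).toReal := by
    intro b
    have h1 : ν {z | g z = b} ≤ ν {z | g' z = b} + ν ({z | g z = b} ∩ D) := by
      refine le_trans (measure_mono ?_) (measure_union_le _ _)
      intro z hz
      by_cases h : g' z = b
      · exact Or.inl h
      · exact Or.inr ⟨hz, fun he => h (by rw [← he]; exact hz)⟩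
    have h2 : ν {z | g' z = b} ≤ ν {z | g z = b} + ν ({z | g' z = b} ∩ D) := by
      refine le_trans (measure_mono ?_) (measure_union_le _ _)
      intro z hz
      by_cases h : g z = b
      · exact Or.inl h
      · exact Or.inr ⟨hz, fun he => h (by rw [he]; exact hz)⟩
    have f1 := ENNReal.toReal_mono (ENNReal.add_ne_top.mpr
      ⟨measure_ne_top _ _, measure_ne_top _ _⟩) h1
    have f2 := ENNReal.toReal_mono (ENNReal.add_ne_top.mpr
      ⟨measure_ne_top _ _, measure_ne_top _ _⟩) h2
    rw [ENNReal.toReal_add (measure_ne_top _ _) (measure_ne_top _ _)] at f1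
    rw [ENNReal.toReal_add (measure_ne_top _ _) (measure_ne_top _ _)] at f2
    have n1 : (0:ℝ) ≤ (ν ({z | g z = b} ∩ D)).toReal := ENNReal.toReal_nonneg
    have n2 : (0:ℝ) ≤ (ν ({z | g' z = b} ∩ D)).toReal := ENNReal.toReal_nonneg
    rw [abs_sub_le_iff]
    constructor <;> linarith
  calc ∑ b, |(ν {z | g z = b}).toReal - (ν {z | g' z = b}).toReal|
      ≤ ∑ b, ((ν ({z | g z = b} ∩ D)).toReal + (ν ({z | g' z = b} ∩ D)).toReal) :=
        Finset.sum_le_sum fun b _ => key b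
    _ = (∑ b, ν ({z | g z = b} ∩ D)).toReal + (∑ b, ν ({z | g' z = b} ∩ D)).toReal := by
        rw [Finset.sum_add_distrib, ENNReal.toReal_sum (fun b _ => measure_ne_top _ _),
          ENNReal.toReal_sum (fun b _ => measure_ne_top _ _)]
    _ = (ν D).toReal + (ν D).toReal := by
        rw [sum_meas_inter ν g hg D hDm, sum_meas_inter ν g' hg' D hDm]
    _ = 2 * (ν D).toReal := by ring

end Aux

/-- With `Z = [0,1]` and `ν` the uniform measure, if the dynamics `Ψ`
satisfies `ν({z : Ψ(x,m,γ,z) ≠ Ψ(x,m̃,γ,z)}) ≤ w(dist(m,m̃))` for a nondecreasing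
`w : [0,∞) → [0,1]`, and `q(p)` denotes the law of `Ψ(y,p,φ(y),z)` under `p ⊗ ρ ⊗ ν`,
then `dist(q(p), q(p̃)) ≤ w(dist(p,p̃)) + dist(p,p̃)`; consequently when
`w(s) → 0` as `s → 0+`, the map `q` is continuous in total variation. -/
theorem stmt_10 {X Γ : Type*} [Fintype X] [DecidableEq X] [Nonempty X] [Fintype Γ]
    [MeasurableSpace X] [MeasurableSingletonClass X]
    (ν : Measure ℝ) (hν : ν = volume.restrict (Set.Icc (0:ℝ) 1))
    (Ψ : X → (X → ℝ) → Γ → ℝ → X)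
    (hΨmeas : ∀ x m γ, Measurable (fun z => Ψ x m γ z))
    (w : ℝ → ℝ) (hwmono : Monotone w) (hw0 : ∀ s, 0 ≤ w s) (hw1 : ∀ s, w s ≤ 1)
    (ρ : (X → Γ) → ℝ) (hρ0 : ∀ φ, 0 ≤ ρ φ) (hρ1 : ∑ φ, ρ φ = 1)
    (hΨ : ∀ (x : X) (γ : Γ) (m m' : X → ℝ), IsProb m → IsProb m' →
      ν {z | Ψ x m γ z ≠ Ψ x m' γ z} ≤ ENNReal.ofReal (w (tv m m')))
    (q : (X → ℝ) → X → ℝ)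
    (hq : ∀ p b, q p b = ∑ y, ∑ φ, p y * ρ φ * (ν {z | Ψ y p (φ y) z = b}).toReal) :
    (∀ p p' : X → ℝ, IsProb p → IsProb p' →
        tv (q p) (q p') ≤ w (tv p p') + tv p p') ∧
    (Tendsto w (nhdsWithin 0 (Set.Ioi 0)) (nhds 0) →
      ∀ (pn : ℕ → X → ℝ) (p : X → ℝ), (∀ n, IsProb (pn n)) → IsProb p →
        Tendsto (fun n => tv (pn n) p) atTop (nhds 0) →
        Tendsto (fun n => tv (q (pn n)) (q p)) atTop (nhds 0)) := by
  have hν1 : ν Set.univ = 1 := by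
    rw [hν, Measure.restrict_apply_univ, Real.volume_Icc]
    norm_num
  haveI : IsFiniteMeasure ν := ⟨by rw [hν1]; exact ENNReal.one_lt_top⟩
  have main : ∀ p p' : X → ℝ, IsProb p → IsProb p' →
      tv (q p) (q p') ≤ w (tv p p') + tv p p' := by
    intro p p' hp hp'
    set d := tv p p' with hd
    -- abbreviations
    have hA'sum : ∀ (y : X) (φ : X → Γ), ∑ b, (ν {z | Ψ y p' (φ y) z = b}).toReal = 1 := by
      intro y φ
      rw [← ENNReal.toReal_sum (fun b _ => measure_ne_top _ _)]
      have h := sum_meas_inter ν (fun z => Ψ y p' (φ y) z) (hΨmeas y p' (φ y))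
        Set.univ MeasurableSet.univ
      simp only [Set.inter_univ] at h
      rw [h, hν1, ENNReal.toReal_one]
    have habs : ∀ (y : X) (φ : X → Γ),
        ∑ b, |(ν {z | Ψ y p (φ y) z = b}).toReal - (ν {z | Ψ y p' (φ y) z = b}).toReal|
          ≤ 2 * w d := by
      intro y φ
      calc ∑ b, |(ν {z | Ψ y p (φ y) z = b}).toReal - (ν {z | Ψ y p' (φ y) z = b}).toReal|
          ≤ 2 * (ν {z | Ψ y p (φ y) z ≠ Ψ y p' (φ y) z}).toReal :=
            diff_bound ν _ _ (hΨmeas y p (φ y)) (hΨmeas y p' (φ y))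
        _ ≤ 2 * w d := by
            have := ENNReal.toReal_le_of_le_ofReal (hw0 d) (hΨ y (φ y) p p' hp hp')
            linarith
    have hb : ∀ b, |q p b - q p' b| ≤ ∑ y, ∑ φ,
        (p y * ρ φ * |(ν {z | Ψ y p (φ y) z = b}).toReal -
            (ν {z | Ψ y p' (φ y) z = b}).toReal|
          + |p y - p' y| * ρ φ * (ν {z | Ψ y p' (φ y) z = b}).toReal) := by
      intro b
      rw [hq, hq]
      have hsub : (∑ y, ∑ φ, p y * ρ φ * (ν {z | Ψ y p (φ y) z = b}).toReal)
          - ∑ y, ∑ φ, p' y * ρ φ * (ν {z | Ψ y p' (φ y) z = b}).toReal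
          = ∑ y, ∑ φ, (p y * ρ φ * (ν {z | Ψ y p (φ y) z = b}).toReal
              - p' y * ρ φ * (ν {z | Ψ y p' (φ y) z = b}).toReal) := by
        rw [← Finset.sum_sub_distrib]
        exact Finset.sum_congr rfl fun y _ => (Finset.sum_sub_distrib _ _).symm
      rw [hsub]
      refine (Finset.abs_sum_le_sum_abs _ _).trans (Finset.sum_le_sum fun y _ => ?_)
      refine (Finset.abs_sum_le_sum_abs _ _).trans (Finset.sum_le_sum fun φ _ => ?_)
      set A := (ν {z | Ψ y p (φ y) z = b}).toReal with hA
      set A' := (ν {z | Ψ y p' (φ y) z = b}).toReal with hA'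
      have hre : p y * ρ φ * A - p' y * ρ φ * A'
          = p y * ρ φ * (A - A') + (p y - p' y) * ρ φ * A' := by ring
      rw [hre]
      calc |p y * ρ φ * (A - A') + (p y - p' y) * ρ φ * A'|
          ≤ |p y * ρ φ * (A - A')| + |(p y - p' y) * ρ φ * A'| := abs_add_le _ _
        _ = p y * ρ φ * |A - A'| + |p y - p' y| * ρ φ * A' := by
            rw [abs_mul, abs_mul, abs_mul, abs_mul, abs_of_nonneg (hp.1 y),
              abs_of_nonneg (hρ0 φ), abs_of_nonneg (show (0:ℝ) ≤ A' from ENNReal.toReal_nonneg)]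
    have hinner : ∀ (y : X) (φ : X → Γ), ∑ b,
        (p y * ρ φ * |(ν {z | Ψ y p (φ y) z = b}).toReal -
            (ν {z | Ψ y p' (φ y) z = b}).toReal|
          + |p y - p' y| * ρ φ * (ν {z | Ψ y p' (φ y) z = b}).toReal)
        ≤ p y * ρ φ * (2 * w d) + |p y - p' y| * ρ φ := by
      intro y φ
      rw [Finset.sum_add_distrib, ← Finset.mul_sum, ← Finset.mul_sum]
      have e2 : |p y - p' y| * ρ φ * ∑ b, (ν {z | Ψ y p' (φ y) z = b}).toReal
          = |p y - p' y| * ρ φ := by rw [hA'sum y φ, mul_one]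
      rw [e2]
      have := mul_le_mul_of_nonneg_left (habs y φ)
        (mul_nonneg (hp.1 y) (hρ0 φ))
      linarith
    have hS : ∑ b, |q p b - q p' b| ≤ 2 * w d + 2 * d := by
      calc ∑ b, |q p b - q p' b|
          ≤ ∑ b, ∑ y, ∑ φ,
            (p y * ρ φ * |(ν {z | Ψ y p (φ y) z = b}).toReal -
                (ν {z | Ψ y p' (φ y) z = b}).toReal|
              + |p y - p' y| * ρ φ * (ν {z | Ψ y p' (φ y) z = b}).toReal) :=
            Finset.sum_le_sum fun b _ => hb b
        _ = ∑ y, ∑ φ, ∑ b,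
            (p y * ρ φ * |(ν {z | Ψ y p (φ y) z = b}).toReal -
                (ν {z | Ψ y p' (φ y) z = b}).toReal|
              + |p y - p' y| * ρ φ * (ν {z | Ψ y p' (φ y) z = b}).toReal) := by
            rw [Finset.sum_comm]
            exact Finset.sum_congr rfl fun y _ => Finset.sum_comm
        _ ≤ ∑ y, ∑ φ, (p y * ρ φ * (2 * w d) + |p y - p' y| * ρ φ) :=
            Finset.sum_le_sum fun y _ => Finset.sum_le_sum fun φ _ => hinner y φ
        _ = ∑ y, (p y * (2 * w d) + |p y - p' y|) := by
            refine Finset.sum_congr rfl fun y _ => ?_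
            have : ∀ φ : X → Γ, p y * ρ φ * (2 * w d) + |p y - p' y| * ρ φ
                = (p y * (2 * w d) + |p y - p' y|) * ρ φ := fun φ => by ring
            rw [Finset.sum_congr rfl fun φ _ => this φ, ← Finset.mul_sum, hρ1, mul_one]
        _ = 2 * w d + 2 * d := by
            rw [Finset.sum_add_distrib, ← Finset.sum_mul, hp.2, one_mul]
            have : ∑ y, |p y - p' y| = 2 * d := by
              rw [hd]; unfold tv; ring
            rw [this]
    have : tv (q p) (q p') = (1/2 : ℝ) * ∑ b, |q p b - q p' b| := rfl
    rw [this]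
    linarith
  refine ⟨main, ?_⟩
  intro hw pn p hpn hp hconv
  have hw00 : w 0 = 0 := by
    have h1 : ∀ᶠ s in nhdsWithin (0:ℝ) (Set.Ioi 0), w 0 ≤ w s :=
      Filter.eventually_of_mem self_mem_nhdsWithin fun s hs => hwmono (le_of_lt hs)
    have := ge_of_tendsto hw h1
    linarith [hw0 0]
  have hIci : Tendsto w (nhdsWithin (0:ℝ) (Set.Ici 0)) (nhds 0) := by
    have hsplit : Set.Ici (0:ℝ) = {0} ∪ Set.Ioi 0 := by
      ext s
      simp only [Set.mem_Ici, Set.mem_union, Set.mem_singleton_iff, Set.mem_Ioi]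
      constructor
      · intro h
        rcases eq_or_lt_of_le h with h' | h'
        · exact Or.inl h'.symm
        · exact Or.inr h'
      · rintro (rfl | h) <;> [exact le_refl 0; exact le_of_lt h]
    rw [hsplit, nhdsWithin_union]
    rw [tendsto_sup]
    constructor
    · rw [nhdsWithin_singleton]
      have := tendsto_pure_nhds w (0:ℝ)
      rwa [hw00] at this
    · exact hw
  have htv : Tendsto (fun n => tv (pn n) p) atTop (nhdsWithin (0:ℝ) (Set.Ici 0)) := by
    refine tendsto_nhdsWithin_of_tendsto_nhds_of_eventually_within _ hconv ?_
    exact Filter.Eventually.of_forall fun n => tv_nonneg _ _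
  have hwcomp : Tendsto (fun n => w (tv (pn n) p)) atTop (nhds 0) := hIci.comp htv
  have hsum : Tendsto (fun n => w (tv (pn n) p) + tv (pn n) p) atTop (nhds 0) := by
    simpa using hwcomp.add hconv
  exact squeeze_zero (fun n => tv_nonneg _ _) (fun n => main (pn n) p (hpn n) hp) hsum
end

section
/- Let X be a finite set and for each N let x^N ∈ X^N with empirical measures μ_N(x^N) := (1/N)∑_{j=1}^N δ_{x^N_j} converging (in total variation) to p ∈ P(X). Fix l ≥ 1 and define the sampling-without-replacement measure μ_{N:l}(x^N) := ((N−l)!/N!)·∑_{λ ∈ I_{N:l}} δ_{(x^N_{λ(1)},…,x^N_{λ(l)})} on X^l, where I_{N:l} is the set of injections from {1,…,l} into {1,…,N}. Then μ_{N:l}(x^N) converges to the product measure p^{⊗l} in P(X^l). -/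
open Filter Finset

lemma aux_fiber_card {α β : Type*} [Fintype α] [Fintype β] [DecidableEq β]
    (φ : α → β) : ∑ b : β, (univ.filter fun a => φ a = b).card = Fintype.card α := by
  rw [← Finset.card_univ,
    Finset.card_eq_sum_card_fiberwise (f := φ) (t := univ) (fun x _ => mem_univ _)]

lemma aux_prod_diff {X : Type*} [Fintype X] (m : ℕ) (q p : X → ℝ)
    (hq0 : ∀ e, 0 ≤ q e) (hp0 : ∀ e, 0 ≤ p e) (hq1 : ∑ e, q e ≤ 1) (hp1 : ∑ e, p e ≤ 1) :
    ∑ v : Fin m → X, |(∏ i, q (v i)) - ∏ i, p (v i)| ≤ m * ∑ e, |q e - p e| := by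
  induction m with
  | zero => simp
  | succ m ih =>
    have habs : 0 ≤ ∑ e, |q e - p e| := Finset.sum_nonneg fun e _ => abs_nonneg _
    have hP : ∑ w : Fin m → X, ∏ i, p (w i) ≤ 1 := by
      rw [← Fintype.sum_pow]
      exact pow_le_one₀ (Finset.sum_nonneg fun e _ => hp0 e) hp1
    set e := Fin.consEquiv (fun _ : Fin (m + 1) => X) with he
    rw [← Equiv.sum_comp e (fun v : Fin (m+1) → X => |(∏ i, q (v i)) - ∏ i, p (v i)|)]
    have hsplit : ∀ (f : X → ℝ) (z : X × (Fin m → X)),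
        (∏ i, f (e z i)) = f z.1 * ∏ i, f (z.2 i) := by
      intro f z
      rw [Fin.prod_univ_succ]
      simp [he, Fin.consEquiv, Fin.cons_zero, Fin.cons_succ]
    calc ∑ z : X × (Fin m → X), |(∏ i, q (e z i)) - ∏ i, p (e z i)|
        ≤ ∑ z : X × (Fin m → X),
            (q z.1 * |(∏ i, q (z.2 i)) - ∏ i, p (z.2 i)| + |q z.1 - p z.1| * ∏ i, p (z.2 i)) := by
          refine Finset.sum_le_sum fun z _ => ?_
          rw [hsplit q z, hsplit p z]
          have : q z.1 * ∏ i, q (z.2 i) - p z.1 * ∏ i, p (z.2 i)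
              = q z.1 * ((∏ i, q (z.2 i)) - ∏ i, p (z.2 i)) + (q z.1 - p z.1) * ∏ i, p (z.2 i) := by
            ring
          rw [this]
          refine (abs_add_le _ _).trans ?_
          rw [abs_mul, abs_mul, abs_of_nonneg (hq0 z.1),
            abs_of_nonneg (Finset.prod_nonneg fun i _ => hp0 _)]
      _ = (∑ a, q a) * (∑ w : Fin m → X, |(∏ i, q (w i)) - ∏ i, p (w i)|)
          + (∑ a, |q a - p a|) * ∑ w : Fin m → X, ∏ i, p (w i) := by
          rw [Fintype.sum_prod_type]
          simp only [Finset.sum_add_distrib, ← Finset.mul_sum, ← Finset.sum_mul]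
      _ ≤ 1 * (m * ∑ e, |q e - p e|) + (∑ a, |q a - p a|) * 1 := by
          refine add_le_add (mul_le_mul hq1 ih (Finset.sum_nonneg fun w _ => abs_nonneg _)
            zero_le_one) (mul_le_mul_of_nonneg_left hP habs)
      _ ≤ (m + 1 : ℕ) * ∑ e, |q e - p e| := by push_cast; nlinarith

lemma aux_card_fun {X : Type*} [DecidableEq X] {l N : ℕ} (g : Fin N → X) (v : Fin l → X) :
    (univ.filter fun f : Fin l → Fin N => ∀ i, g (f i) = v i).card
      = ∏ i, (univ.filter fun j : Fin N => g j = v i).card := by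
  rw [← Fintype.card_subtype]
  rw [Fintype.card_congr (Equiv.subtypePiEquivPi (p := fun i (j : Fin N) => g j = v i))]
  rw [Fintype.card_pi]
  exact Finset.prod_congr rfl fun i _ => Fintype.card_subtype _

lemma aux_fiber_card' {α β : Type*} [Fintype α] [Fintype β] [DecidableEq β]
    (φ : α → β) : ∑ b : β, (univ.filter fun a => φ a = b).card = Fintype.card α := by
  rw [← Finset.card_univ,
    Finset.card_eq_sum_card_fiberwise (f := φ) (t := univ) (fun x _ => mem_univ _)]

lemma aux_sum_card_fun {X : Type*} [Fintype X] [DecidableEq X] {l N : ℕ} (g : Fin N → X) :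
    ∑ v : Fin l → X, (univ.filter fun f : Fin l → Fin N => ∀ i, g (f i) = v i).card
      = N ^ l := by
  have : ∀ v : Fin l → X, (univ.filter fun f : Fin l → Fin N => ∀ i, g (f i) = v i)
      = (univ.filter fun f : Fin l → Fin N => (fun i => g (f i)) = v) := by
    intro v; exact Finset.filter_congr fun f _ => by simp [funext_iff]
  simp_rw [this]
  rw [aux_fiber_card' (fun f : Fin l → Fin N => fun i => g (f i))]
  simp [Fintype.card_fun]

lemma aux_sum_card_emb {X : Type*} [Fintype X] [DecidableEq X] {l N : ℕ} (g : Fin N → X) :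
    ∑ v : Fin l → X, (univ.filter fun lam : Fin l ↪ Fin N => ∀ i, g (lam i) = v i).card
      = N.descFactorial l := by
  have : ∀ v : Fin l → X, (univ.filter fun lam : Fin l ↪ Fin N => ∀ i, g (lam i) = v i)
      = (univ.filter fun lam : Fin l ↪ Fin N => (fun i => g (lam i)) = v) := by
    intro v; exact Finset.filter_congr fun f _ => by simp [funext_iff]
  simp_rw [this]
  rw [aux_fiber_card' (fun lam : Fin l ↪ Fin N => fun i => g (lam i))]
  simp [Fintype.card_embedding_eq]

lemma aux_card_emb_le {X : Type*} [DecidableEq X] {l N : ℕ} (g : Fin N → X) (v : Fin l → X) :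
    (univ.filter fun lam : Fin l ↪ Fin N => ∀ i, g (lam i) = v i).card
      ≤ (univ.filter fun f : Fin l → Fin N => ∀ i, g (f i) = v i).card := by
  refine Finset.card_le_card_of_injOn (fun lam => ⇑lam) ?_ ?_
  · intro lam hlam
    simp only [Finset.mem_coe, mem_filter, mem_univ, true_and] at hlam ⊢
    exact hlam
  · intro a _ b _ h
    exact DFunLike.coe_injective h

lemma aux_ratio (l : ℕ) :
    Tendsto (fun N : ℕ => ((N.descFactorial l : ℝ)) / (N : ℝ) ^ l) atTop (nhds 1) := by
  have h1 : Tendsto (fun N : ℕ => ∏ j ∈ Finset.range l, (1 - (j : ℝ) / (N : ℝ)))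
      atTop (nhds 1) := by
    have := tendsto_finset_prod (f := fun (j : ℕ) (N : ℕ) => (1 : ℝ) - (j : ℝ) / (N : ℝ))
      (a := fun _ => (1 : ℝ)) (Finset.range l) (fun j _ => by
        simpa using tendsto_const_nhds.sub (tendsto_const_div_atTop_nhds_zero_nat (j : ℝ)))
    simpa using this
  refine h1.congr' ?_ |>.mono_left ?_
  · filter_upwards [eventually_ge_atTop l, eventually_ge_atTop 1] with N hlN hN1
    have hN0 : (N : ℝ) ≠ 0 := by positivity
    rw [Nat.descFactorial_eq_prod_range]
    push_cast
    have hpow : (N : ℝ) ^ l = ∏ _j ∈ Finset.range l, (N : ℝ) := by simp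
    rw [hpow, ← Finset.prod_div_distrib]
    refine Finset.prod_congr rfl fun j hj => ?_
    have hjN : j ≤ N := le_trans (le_of_lt (Finset.mem_range.mp hj)) hlN
    rw [Nat.cast_sub hjN, sub_div, div_self hN0]
  · exact le_refl _

section Key
variable {X : Type*} [Fintype X] [DecidableEq X]

lemma aux_card_fun' {l N : ℕ} (g : Fin N → X) (v : Fin l → X) :
    (univ.filter fun f : Fin l → Fin N => ∀ i, g (f i) = v i).card
      = ∏ i, (univ.filter fun j : Fin N => g j = v i).card := by
  rw [← Fintype.card_subtype]
  rw [Fintype.card_congr (Equiv.subtypePiEquivPi (p := fun i (j : Fin N) => g j = v i))]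
  rw [Fintype.card_pi]
  exact Finset.prod_congr rfl fun i _ => Fintype.card_subtype _

lemma aux_key {l N : ℕ} (hlN : l ≤ N) (hN : 0 < N) (g : Fin N → X) (p : X → ℝ)
    (hp0 : ∀ e, 0 ≤ p e) (hp1 : ∑ e, p e = 1)
    (hsA : (∑ v : Fin l → X, ((univ.filter fun lam : Fin l ↪ Fin N => ∀ i, g (lam i) = v i).card : ℝ)) = (N.descFactorial l : ℝ))
    (hsB : (∑ v : Fin l → X, ((univ.filter fun f : Fin l → Fin N => ∀ i, g (f i) = v i).card : ℝ)) = (N : ℝ) ^ l)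
    (hAB : ∀ v : Fin l → X, ((univ.filter fun lam : Fin l ↪ Fin N => ∀ i, g (lam i) = v i).card : ℝ) ≤ ((univ.filter fun f : Fin l → Fin N => ∀ i, g (f i) = v i).card : ℝ))
    (hprodq : ∑ v : Fin l → X, |(∏ i, (((univ.filter fun j : Fin N => g j = v i).card : ℝ) / N)) - ∏ i, p (v i)| ≤ (l : ℝ) * ∑ e, |((univ.filter fun j : Fin N => g j = e).card : ℝ) / N - p e|) :
    ∑ v : Fin l → X,
        |(((N - l).factorial : ℝ) / (N.factorial : ℝ)) *
            ((univ.filter fun lam : Fin l ↪ Fin N => ∀ i, g (lam i) = v i).card : ℝ)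
          - ∏ i, p (v i)|
      ≤ 2 * (1 - (N.descFactorial l : ℝ) / (N : ℝ) ^ l)
        + (l : ℝ) * ∑ e, |((univ.filter fun j : Fin N => g j = e).card : ℝ) / N - p e| := by
  set A : (Fin l → X) → ℝ := fun v => ((univ.filter fun lam : Fin l ↪ Fin N => ∀ i, g (lam i) = v i).card : ℝ) with hA
  set B : (Fin l → X) → ℝ := fun v => ((univ.filter fun f : Fin l → Fin N => ∀ i, g (f i) = v i).card : ℝ) with hB
  have hd0 : (0 : ℝ) < (N.descFactorial l : ℝ) := by
    have : 0 < N.descFactorial l := Nat.pos_of_ne_zero fun h =>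
      absurd (Nat.descFactorial_eq_zero_iff_lt.mp h) (not_lt.mpr hlN)
    exact_mod_cast this
  have hNpow : (0 : ℝ) < (N : ℝ) ^ l := by positivity
  have hdle : (N.descFactorial l : ℝ) ≤ (N : ℝ) ^ l := by
    have := Nat.descFactorial_le_pow N l
    exact_mod_cast this
  have hfrac : (((N - l).factorial : ℝ) / (N.factorial : ℝ)) = ((N.descFactorial l : ℝ))⁻¹ := by
    have h := Nat.factorial_mul_descFactorial hlN
    have h' : ((N - l).factorial : ℝ) * (N.descFactorial l : ℝ) = (N.factorial : ℝ) := by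
      exact_mod_cast congrArg (Nat.cast : ℕ → ℝ) h
    have hf0 : ((N - l).factorial : ℝ) ≠ 0 := by positivity
    field_simp [← h']
    exact h'
  have hinv : ((N : ℝ) ^ l)⁻¹ ≤ ((N.descFactorial l : ℝ))⁻¹ :=
    inv_anti₀ hd0 hdle
  have hBq : ∀ v : Fin l → X, B v / (N : ℝ) ^ l
      = ∏ i, (((univ.filter fun j : Fin N => g j = v i).card : ℝ) / N) := by
    intro v
    rw [hB]
    simp only
    rw [aux_card_fun' g v]
    push_cast
    rw [Finset.prod_div_distrib]
    congr 1
    simp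
  have key : ∀ v : Fin l → X,
      |(((N - l).factorial : ℝ) / (N.factorial : ℝ)) * A v - ∏ i, p (v i)|
        ≤ (A v * (((N.descFactorial l : ℝ))⁻¹ - ((N : ℝ) ^ l)⁻¹) + (B v - A v) / (N : ℝ) ^ l)
          + |(∏ i, (((univ.filter fun j : Fin N => g j = v i).card : ℝ) / N)) - ∏ i, p (v i)| := by
    intro v
    have hA0 : 0 ≤ A v := by positivity
    calc |(((N - l).factorial : ℝ) / (N.factorial : ℝ)) * A v - ∏ i, p (v i)|
        ≤ |(((N - l).factorial : ℝ) / (N.factorial : ℝ)) * A v - B v / (N : ℝ) ^ l|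
          + |B v / (N : ℝ) ^ l - ∏ i, p (v i)| := abs_sub_le _ _ _
      _ ≤ (A v * (((N.descFactorial l : ℝ))⁻¹ - ((N : ℝ) ^ l)⁻¹) + (B v - A v) / (N : ℝ) ^ l)
          + |(∏ i, (((univ.filter fun j : Fin N => g j = v i).card : ℝ) / N)) - ∏ i, p (v i)| := by
          rw [hfrac, ← hBq v]
          refine add_le_add ?_ le_rfl
          have heq : ((N.descFactorial l : ℝ))⁻¹ * A v - B v / (N : ℝ) ^ l
              = (A v * (((N.descFactorial l : ℝ))⁻¹ - ((N : ℝ) ^ l)⁻¹)) - ((B v - A v) / (N : ℝ) ^ l) := by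
            field_simp
            ring
          rw [heq]
          refine (abs_sub _ _).trans ?_
          rw [abs_of_nonneg, abs_of_nonneg]
          · exact div_nonneg (sub_nonneg.mpr (hAB v)) hNpow.le
          · exact mul_nonneg hA0 (sub_nonneg.mpr hinv)
  calc ∑ v : Fin l → X, |(((N - l).factorial : ℝ) / (N.factorial : ℝ)) * A v - ∏ i, p (v i)|
      ≤ ∑ v : Fin l → X, ((A v * (((N.descFactorial l : ℝ))⁻¹ - ((N : ℝ) ^ l)⁻¹) + (B v - A v) / (N : ℝ) ^ l)
          + |(∏ i, (((univ.filter fun j : Fin N => g j = v i).card : ℝ) / N)) - ∏ i, p (v i)|) :=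
        Finset.sum_le_sum fun v _ => key v
    _ ≤ 2 * (1 - (N.descFactorial l : ℝ) / (N : ℝ) ^ l)
        + (l : ℝ) * ∑ e, |((univ.filter fun j : Fin N => g j = e).card : ℝ) / N - p e| := by
        rw [Finset.sum_add_distrib, Finset.sum_add_distrib, ← Finset.sum_mul, ← Finset.sum_div,
          Finset.sum_sub_distrib, hsA, hsB]
        have e1 : (N.descFactorial l : ℝ) * (((N.descFactorial l : ℝ))⁻¹ - ((N : ℝ) ^ l)⁻¹)
            + ((N : ℝ) ^ l - (N.descFactorial l : ℝ)) / (N : ℝ) ^ l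
            = 2 * (1 - (N.descFactorial l : ℝ) / (N : ℝ) ^ l) := by
          field_simp
          ring
        rw [e1]
        exact add_le_add le_rfl hprodq

end Key

/-- If the empirical measures `μ_N(x^N)` of tuples `x^N ∈ X^N` converge in
total variation to `p`, then for fixed `l ≥ 1` the sampling-without-replacement measures
`μ_{N:l}(x^N) = ((N−l)!/N!)·∑_{λ injection} δ_{(x^N_{λ(1)},…,x^N_{λ(l)})}` converge to
the product measure `p^{⊗l}` on `X^l`. -/
theorem stmt_11 {X : Type*} [Fintype X] [DecidableEq X] [Nonempty X]
    (x : (N : ℕ) → Fin N → X) (p : X → ℝ)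
    (hp0 : ∀ e, 0 ≤ p e) (hp1 : ∑ e, p e = 1)
    (hconv : Tendsto
      (fun N : ℕ => (1/2 : ℝ) * ∑ e, |(1/(N : ℝ)) * ∑ i, (if x N i = e then (1:ℝ) else 0) - p e|)
      atTop (nhds 0))
    (l : ℕ) (hl : 1 ≤ l) :
    Tendsto (fun N : ℕ => (1/2 : ℝ) * ∑ v : Fin l → X,
        |(((N - l).factorial : ℝ)/(N.factorial : ℝ)) *
            ((Finset.univ.filter
              (fun lam : Fin l ↪ Fin N => ∀ i, x N (lam i) = v i)).card : ℝ)
          - ∏ i, p (v i)|)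
      atTop (nhds 0) := by
  have hg : Tendsto (fun N : ℕ => (1 - (N.descFactorial l : ℝ)/(N:ℝ)^l)
      + (l:ℝ) * ((1/2 : ℝ) * ∑ e, |(1/(N : ℝ)) * ∑ i, (if x N i = e then (1:ℝ) else 0) - p e|))
      atTop (nhds 0) := by
    have h1 : Tendsto (fun N : ℕ => 1 - (N.descFactorial l : ℝ)/(N:ℝ)^l) atTop (nhds 0) := by
      simpa using (tendsto_const_nhds (x := (1:ℝ))).sub (aux_ratio l)
    have h2 := hconv.const_mul (l:ℝ)
    simpa using h1.add h2
  refine squeeze_zero' ?_ ?_ hg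
  · filter_upwards with N
    positivity
  · filter_upwards [eventually_ge_atTop l] with N hlN
    have hN : 0 < N := lt_of_lt_of_le hl hlN
    have hTe : (∑ e, |(1/(N : ℝ)) * ∑ i, (if x N i = e then (1:ℝ) else 0) - p e|)
        = ∑ e, |((univ.filter fun j : Fin N => x N j = e).card : ℝ)/N - p e| := by
      refine Finset.sum_congr rfl fun e _ => ?_
      rw [Finset.sum_boole, one_div, inv_mul_eq_div]
    have hsA : (∑ v : Fin l → X,
        ((univ.filter fun lam : Fin l ↪ Fin N => ∀ i, x N (lam i) = v i).card : ℝ))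
        = (N.descFactorial l : ℝ) := by
      exact_mod_cast aux_sum_card_emb (x N)
    have hsB : (∑ v : Fin l → X,
        ((univ.filter fun f : Fin l → Fin N => ∀ i, x N (f i) = v i).card : ℝ))
        = (N : ℝ) ^ l := by
      exact_mod_cast aux_sum_card_fun (x N)
    have hAB : ∀ v : Fin l → X,
        ((univ.filter fun lam : Fin l ↪ Fin N => ∀ i, x N (lam i) = v i).card : ℝ)
        ≤ ((univ.filter fun f : Fin l → Fin N => ∀ i, x N (f i) = v i).card : ℝ) :=
      fun v => Nat.cast_le.mpr (aux_card_emb_le (x N) v)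
    have hsumc : (∑ e, ((univ.filter fun j : Fin N => x N j = e).card : ℝ)) = (N : ℝ) := by
      have := aux_fiber_card' (x N)
      rw [Fintype.card_fin] at this
      exact_mod_cast this
    have hq1 : (∑ e, ((univ.filter fun j : Fin N => x N j = e).card : ℝ)/N) = 1 := by
      rw [← Finset.sum_div, hsumc, div_self]
      exact_mod_cast hN.ne'
    have hprodq := aux_prod_diff l (fun e => ((univ.filter fun j : Fin N => x N j = e).card : ℝ)/N)
      p (fun e => by positivity) hp0 (le_of_eq hq1) (le_of_eq hp1)
    have hkey := aux_key hlN hN (x N) p hp0 hp1 hsA hsB hAB hprodq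
    rw [hTe]
    linarith
end

section
/- Let (Ω,F,P) be a probability space with random variables X_0, ξ = (ξ_1,…,ξ_T) (all with values in standard Borel spaces), Φ, and μ, such that (X_0, ξ) is independent of (Φ, μ). Fix t, and suppose X^{(t)} is a random variable measurable with respect to σ(X_0, ξ_1,…,ξ_t, Φ, μ^{(t)}), where μ^{(t)} is a measurable function of μ. Let P_φ := P(·|Φ=φ) for an atom φ of Φ. Then under P_φ, X^{(t)} and μ are conditionally independent given μ^{(t)}: for all measurable A, B, E_φ[1_A(X^{(t)})·1_B(μ) | μ^{(t)}] = E_φ[1_A(X^{(t)}) | μ^{(t)}]·E_φ[1_B(μ) | μ^{(t)}] a.s. -/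
open MeasureTheory ProbabilityTheory

lemma aux_condexp_mul {Ω E M M' : Type*} (m : MeasurableSpace Ω) [MeasurableSpace E]
    [MeasurableSpace M] [MeasurableSpace M'] [MeasurableSpace Ω]
    (P : Measure Ω) [IsProbabilityMeasure P]
    (W : Ω → E) (V : Ω → M) (μt : M → M')
    (hW : Measurable W) (hV : Measurable V) (hμt : Measurable μt)
    (hm_def : m = MeasurableSpace.comap (fun ω => μt (V ω)) inferInstance)
    (hind : IndepFun W V P) {D : Set (E × M')} (hD : MeasurableSet D)
    {B : Set M} (hB : MeasurableSet B) :
    (fun ω => ((P.map W) ((fun w => (w, μt (V ω))) ⁻¹' D)).toReal *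
      condExp m P (fun ω => B.indicator (fun _ => (1:ℝ)) (V ω)) ω)
    =ᵐ[P]
    condExp m P (fun ω => D.indicator (fun _ => (1:ℝ)) (W ω, μt (V ω)) *
        B.indicator (fun _ => (1:ℝ)) (V ω)) := by
  have hV' : Measurable (fun ω => μt (V ω)) := hμt.comp hV
  have hm : m ≤ ‹MeasurableSpace Ω› := hm_def ▸ hV'.comap_le
  haveI : SigmaFinite (P.trim hm) := inferInstance
  haveI : IsProbabilityMeasure (P.map W) := Measure.isProbabilityMeasure_map hW.aemeasurable
  haveI : IsProbabilityMeasure (P.map V) := Measure.isProbabilityMeasure_map hV.aemeasurable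
  have hprod : P.map (fun ω => (W ω, V ω)) = (P.map W).prod (P.map V) :=
    (indepFun_iff_map_prod_eq_prod_map_map hW.aemeasurable hV.aemeasurable).mp hind
  have h1meas : Measurable (fun m' => (P.map W) ((fun w => (w, m')) ⁻¹' D)) :=
    measurable_measure_prodMk_right hD
  have h1meas' : Measurable (fun m' => ((P.map W) ((fun w => (w, m')) ⁻¹' D)).toReal) :=
    h1meas.ennreal_toReal
  have h1bd : ∀ m', ‖((P.map W) ((fun w => (w, m')) ⁻¹' D)).toReal‖ ≤ 1 := by
    intro m'
    rw [Real.norm_eq_abs, abs_of_nonneg ENNReal.toReal_nonneg]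
    exact ENNReal.toReal_le_of_le_ofReal one_pos.le (by simpa using prob_le_one)
  set Yb : Ω → ℝ := fun ω => B.indicator (fun _ => (1:ℝ)) (V ω) with hYb_def
  have hYbeq : Yb = (V ⁻¹' B).indicator (fun _ => (1:ℝ)) := by
    funext ω; by_cases h : V ω ∈ B <;> simp [hYb_def, h]
  have hYbint : Integrable Yb P := by
    rw [hYbeq]; exact (integrable_const (1:ℝ)).indicator (hV hB)
  set f : Ω → ℝ := fun ω => D.indicator (fun _ => (1:ℝ)) (W ω, μt (V ω)) * Yb ω with hf_def
  have hT : MeasurableSet ((fun ω => (W ω, μt (V ω))) ⁻¹' D ∩ V ⁻¹' B) :=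
    ((hW.prodMk hV') hD).inter (hV hB)
  have hfeq : f = ((fun ω => (W ω, μt (V ω))) ⁻¹' D ∩ V ⁻¹' B).indicator (fun _ => (1:ℝ)) := by
    funext ω
    by_cases h1 : (W ω, μt (V ω)) ∈ D <;> by_cases h2 : V ω ∈ B <;>
      simp [hf_def, hYb_def, h1, h2, Set.indicator]
  have hfint : Integrable f P := by
    rw [hfeq]; exact (integrable_const (1:ℝ)).indicator hT
  have hVm' : Measurable[m] (fun ω => μt (V ω)) := by
    rw [hm_def]; exact Measurable.of_comap_le le_rfl
  have hh1m : Measurable[m] (fun ω => ((P.map W) ((fun w => (w, μt (V ω))) ⁻¹' D)).toReal) :=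
    h1meas'.comp hVm'
  refine (ae_eq_condExp_of_forall_setIntegral_eq hm hfint ?_ ?_ ?_)
  · intro s _ _
    refine Integrable.integrableOn ?_
    exact Integrable.bdd_mul integrable_condExp ((h1meas'.comp hV').aestronglyMeasurable)
      (ae_of_all _ fun ω => h1bd _)
  · rintro s hs -
    rw [hm_def] at hs
    obtain ⟨K, hK, rfl⟩ := hs
    set G : Ω → ℝ := fun ω =>
      K.indicator (fun _ => (1:ℝ)) (μt (V ω)) *
        ((P.map W) ((fun w => (w, μt (V ω))) ⁻¹' D)).toReal with hG_def
    have hGm : StronglyMeasurable[m] G :=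
      (((measurable_const.indicator hK).comp hVm').mul hh1m).stronglyMeasurable
    have hGbd : ∀ ω, ‖G ω‖ ≤ 1 := by
      intro ω
      rw [hG_def, Real.norm_eq_abs, abs_mul]
      have h1 : |K.indicator (fun _ => (1:ℝ)) (μt (V ω))| ≤ 1 := by
        by_cases h : μt (V ω) ∈ K <;> simp [h]
      have h2 : |((P.map W) ((fun w => (w, μt (V ω))) ⁻¹' D)).toReal| ≤ 1 := by
        simpa [Real.norm_eq_abs] using h1bd (μt (V ω))
      calc |K.indicator (fun _ => (1:ℝ)) (μt (V ω))| *
            |((P.map W) ((fun w => (w, μt (V ω))) ⁻¹' D)).toReal|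
          ≤ 1 * 1 := mul_le_mul h1 h2 (abs_nonneg _) zero_le_one
        _ = 1 := mul_one 1
    have hGYint : Integrable (fun ω => G ω * Yb ω) P :=
      hYbint.bdd_mul (hGm.mono hm).aestronglyMeasurable (ae_of_all _ hGbd)
    have hpull : condExp m P (fun ω => G ω * Yb ω) =ᵐ[P] fun ω => G ω * condExp m P Yb ω :=
      condExp_mul_of_stronglyMeasurable_left hGm hGYint hYbint
    set U : Set (E × M) :=
      ((fun p : E × M => (p.1, μt p.2)) ⁻¹' D) ∩ (Prod.snd ⁻¹' B) ∩
        ((fun p : E × M => μt p.2) ⁻¹' K) with hU_def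
    have hU : MeasurableSet U :=
      ((((measurable_fst.prodMk (hμt.comp measurable_snd)) hD).inter
        (measurable_snd hB)).inter ((hμt.comp measurable_snd) hK))
    set F : M → ℝ := fun v =>
      K.indicator (fun _ => (1:ℝ)) (μt v) *
        ((P.map W) ((fun w => (w, μt v)) ⁻¹' D)).toReal *
        B.indicator (fun _ => (1:ℝ)) v with hF_def
    have hFm : Measurable F :=
      (((measurable_const.indicator hK).comp hμt).mul (h1meas'.comp hμt)).mul
        (measurable_const.indicator hB)
    have hFeq : ∀ v, F v = ((P.map W) ((fun w => (w, v)) ⁻¹' U)).toReal := by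
      intro v
      by_cases h3 : μt v ∈ K <;> by_cases h2 : v ∈ B
      · have hsec : (fun w => (w, v)) ⁻¹' U = (fun w => (w, μt v)) ⁻¹' D := by
          ext w; simp [hU_def, h2, h3]
        rw [hsec]; simp [hF_def, h2, h3]
      all_goals
        have hsec : (fun w => (w, v)) ⁻¹' U = (∅ : Set E) := by
          ext w; simp [hU_def, h2, h3]
      all_goals rw [hsec]; simp [hF_def, h2, h3]
    calc ∫ x in (fun ω => μt (V ω)) ⁻¹' K,
          ((P.map W) ((fun w => (w, μt (V x))) ⁻¹' D)).toReal * condExp m P Yb x ∂P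
        = ∫ x, G x * condExp m P Yb x ∂P := by
          rw [← integral_indicator (hV' hK)]
          refine integral_congr_ae (ae_of_all _ fun x => ?_)
          by_cases h : μt (V x) ∈ K <;> simp [hG_def, h]
      _ = ∫ x, condExp m P (fun ω => G ω * Yb ω) x ∂P := (integral_congr_ae hpull).symm
      _ = ∫ x, G x * Yb x ∂P := integral_condExp hm
      _ = ∫ v, F v ∂(P.map V) := by
          rw [integral_map hV.aemeasurable hFm.aestronglyMeasurable]
      _ = ∫ v, ((P.map W) ((fun w => (w, v)) ⁻¹' U)).toReal ∂(P.map V) :=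
          integral_congr_ae (ae_of_all _ hFeq)
      _ = (∫⁻ v, (P.map W) ((fun w => (w, v)) ⁻¹' U) ∂(P.map V)).toReal :=
          integral_toReal (measurable_measure_prodMk_right hU).aemeasurable
            (ae_of_all _ fun v => measure_lt_top _ _)
      _ = (((P.map W).prod (P.map V)) U).toReal := by rw [Measure.prod_apply_symm hU]
      _ = (P ((fun ω => (W ω, V ω)) ⁻¹' U)).toReal := by
          rw [← hprod, Measure.map_apply (hW.prodMk hV) hU]
      _ = ∫ x, ((fun ω => (W ω, V ω)) ⁻¹' U).indicator (fun _ => (1:ℝ)) x ∂P := by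
          rw [integral_indicator_const (1:ℝ) ((hW.prodMk hV) hU)]; simp [Measure.real]
      _ = ∫ x, ((fun ω => μt (V ω)) ⁻¹' K).indicator f x ∂P := by
          refine integral_congr_ae (ae_of_all _ fun x => ?_)
          by_cases h1 : (W x, μt (V x)) ∈ D <;> by_cases h2 : V x ∈ B <;>
            by_cases h3 : μt (V x) ∈ K <;>
            simp [hU_def, hf_def, hYb_def, Set.indicator, h1, h2, h3]
      _ = ∫ x in (fun ω => μt (V ω)) ⁻¹' K, f x ∂P := integral_indicator (hV' hK)
  · exact ((hh1m.stronglyMeasurable).mul stronglyMeasurable_condExp).aestronglyMeasurable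

lemma aux_condexp_one {Ω E M M' : Type*} (m : MeasurableSpace Ω) [MeasurableSpace E]
    [MeasurableSpace M] [MeasurableSpace M'] [MeasurableSpace Ω]
    (P : Measure Ω) [IsProbabilityMeasure P]
    (W : Ω → E) (V : Ω → M) (μt : M → M')
    (hW : Measurable W) (hV : Measurable V) (hμt : Measurable μt)
    (hm_def : m = MeasurableSpace.comap (fun ω => μt (V ω)) inferInstance)
    (hind : IndepFun W V P) {D : Set (E × M')} (hD : MeasurableSet D) :
    (fun ω => ((P.map W) ((fun w => (w, μt (V ω))) ⁻¹' D)).toReal)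
    =ᵐ[P] condExp m P (fun ω => D.indicator (fun _ => (1:ℝ)) (W ω, μt (V ω))) := by
  have hm : m ≤ ‹MeasurableSpace Ω› := hm_def ▸ (hμt.comp hV).comap_le
  have h := aux_condexp_mul m P W V μt hW hV hμt hm_def hind hD MeasurableSet.univ
  simp only [Set.indicator_univ, mul_one, condExp_const hm] at h
  simpa using h


/-- If `(X_0, ξ)` is independent of `(Φ, μ)`, `X^{(t)}` is measurable with
respect to `σ(X_0, ξ_1,…,ξ_t, Φ, μ^{(t)})` where `μ^{(t)}` is a measurable function of `μ`,
and `φ` is an atom of `Φ`, then under `P_φ = P(·|Φ=φ)`, `X^{(t)}` and `μ` are conditionally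
independent given `μ^{(t)}`:
`E_φ[1_A(X^{(t)})·1_B(μ) | μ^{(t)}] = E_φ[1_A(X^{(t)}) | μ^{(t)}]·E_φ[1_B(μ) | μ^{(t)}]` a.s. -/
theorem stmt_16 {Ω S0 Z M M' R S : Type*}
    [MeasurableSpace Ω] [MeasurableSpace S0] [MeasurableSpace Z] [MeasurableSpace M]
    [MeasurableSpace M'] [MeasurableSpace R] [MeasurableSingletonClass R] [MeasurableSpace S]
    (P : Measure Ω) [IsProbabilityMeasure P]
    (X0 : Ω → S0) {t : ℕ} (ξ : Fin t → Ω → Z) (Φ : Ω → R) (μv : Ω → M)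
    (μt : M → M') (Xt : Ω → S)
    (hX0 : Measurable X0) (hξ : ∀ i, Measurable (ξ i)) (hΦ : Measurable Φ)
    (hμv : Measurable μv) (hμt : Measurable μt)
    (hind : IndepFun (fun ω => (X0 ω, fun i => ξ i ω)) (fun ω => (Φ ω, μv ω)) P)
    (hXt : Measurable[MeasurableSpace.comap
      (fun ω => (X0 ω, fun i => ξ i ω, Φ ω, μt (μv ω))) inferInstance] Xt)
    (φ : R) (hφ : P {ω | Φ ω = φ} ≠ 0)
    {A : Set S} (hA : MeasurableSet A) {B : Set M} (hB : MeasurableSet B) :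
    condExp (MeasurableSpace.comap (fun ω => μt (μv ω)) inferInstance)
        (ProbabilityTheory.cond P {ω | Φ ω = φ})
        (fun ω => A.indicator (fun _ => (1:ℝ)) (Xt ω) * B.indicator (fun _ => (1:ℝ)) (μv ω))
      =ᵐ[ProbabilityTheory.cond P {ω | Φ ω = φ}]
    fun ω =>
      (condExp (MeasurableSpace.comap (fun ω => μt (μv ω)) inferInstance)
        (ProbabilityTheory.cond P {ω | Φ ω = φ})
        (fun ω => A.indicator (fun _ => (1:ℝ)) (Xt ω)) ω)
      * (condExp (MeasurableSpace.comap (fun ω => μt (μv ω)) inferInstance)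
        (ProbabilityTheory.cond P {ω | Φ ω = φ})
        (fun ω => B.indicator (fun _ => (1:ℝ)) (μv ω)) ω) := by
  have hSm : MeasurableSet {ω | Φ ω = φ} := hΦ (measurableSet_singleton φ)
  haveI : IsProbabilityMeasure (ProbabilityTheory.cond P {ω | Φ ω = φ}) :=
    cond_isProbabilityMeasure hφ
  set W : Ω → S0 × (Fin t → Z) := fun ω => (X0 ω, fun i => ξ i ω) with hW_def
  have hWm : Measurable W := hX0.prodMk (measurable_pi_lambda _ hξ)
  have hpairm : Measurable (fun ω => (Φ ω, μv ω)) := hΦ.prodMk hμv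
  have hS_ne_top : P {ω | Φ ω = φ} ≠ ⊤ := measure_ne_top P _
  -- independence of W and μv under the conditional measure
  have hindWV : IndepFun W μv (ProbabilityTheory.cond P {ω | Φ ω = φ}) := by
    rw [indepFun_iff_measure_inter_preimage_eq_mul]
    intro E F hE hF
    have hkey : ∀ (G : Set (R × M)), MeasurableSet G →
        P (W ⁻¹' E ∩ (fun ω => (Φ ω, μv ω)) ⁻¹' G)
          = P (W ⁻¹' E) * P ((fun ω => (Φ ω, μv ω)) ⁻¹' G) := fun G hG =>
      hind.measure_inter_preimage_eq_mul E G hE hG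
    have e1 : (fun ω => (Φ ω, μv ω)) ⁻¹' (({φ} : Set R) ×ˢ F)
        = {ω | Φ ω = φ} ∩ μv ⁻¹' F := by
      ext ω
      simp only [Set.mem_preimage, Set.mem_prod, Set.mem_singleton_iff, Set.mem_setOf_eq,
        Set.mem_inter_iff]
    have e2 : (fun ω => (Φ ω, μv ω)) ⁻¹' (({φ} : Set R) ×ˢ (Set.univ : Set M))
        = {ω | Φ ω = φ} := by
      ext ω; simp [eq_comm]
    have hP1 : P ({ω | Φ ω = φ} ∩ (W ⁻¹' E ∩ μv ⁻¹' F))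
        = P (W ⁻¹' E) * P ({ω | Φ ω = φ} ∩ μv ⁻¹' F) := by
      rw [show {ω | Φ ω = φ} ∩ (W ⁻¹' E ∩ μv ⁻¹' F)
          = W ⁻¹' E ∩ ({ω | Φ ω = φ} ∩ μv ⁻¹' F) by ext ω; simp; tauto, ← e1,
        hkey _ ((measurableSet_singleton φ).prod hF), e1]
    have hP2 : P ({ω | Φ ω = φ} ∩ W ⁻¹' E) = P (W ⁻¹' E) * P {ω | Φ ω = φ} := by
      rw [Set.inter_comm, ← e2, hkey _ ((measurableSet_singleton φ).prod MeasurableSet.univ), e2]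
    rw [cond_apply hSm, cond_apply hSm, cond_apply hSm, hP1, hP2]
    calc (P {ω | Φ ω = φ})⁻¹ * (P (W ⁻¹' E) * P ({ω | Φ ω = φ} ∩ μv ⁻¹' F))
        = (P {ω | Φ ω = φ} * (P {ω | Φ ω = φ})⁻¹) *
            ((P {ω | Φ ω = φ})⁻¹ * (P (W ⁻¹' E) * P ({ω | Φ ω = φ} ∩ μv ⁻¹' F))) := by
          rw [ENNReal.mul_inv_cancel hφ hS_ne_top, one_mul]
      _ = (P {ω | Φ ω = φ})⁻¹ * (P (W ⁻¹' E) * P {ω | Φ ω = φ}) *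
            ((P {ω | Φ ω = φ})⁻¹ * P ({ω | Φ ω = φ} ∩ μv ⁻¹' F)) := by ring
  -- a.e. Φ = φ under the conditional measure
  have haeΦ : ∀ᵐ ω ∂(ProbabilityTheory.cond P {ω | Φ ω = φ}), Φ ω = φ := by
    rw [ae_iff]
    have : {ω | ¬ Φ ω = φ} = {ω | Φ ω = φ}ᶜ := by ext ω; simp
    rw [this, cond_apply hSm, Set.inter_compl_self, measure_empty, mul_zero]
  -- rewrite the Xt-indicator via a set in the (W, μt∘μv) variables
  obtain ⟨C, hC, hCeq⟩ := MeasurableSpace.measurableSet_comap.mp (hXt hA)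
  set ψ : (S0 × (Fin t → Z)) × M' → S0 × ((Fin t → Z) × (R × M')) :=
    fun p => (p.1.1, (p.1.2, (φ, p.2))) with hψ_def
  have hψm : Measurable ψ :=
    (measurable_fst.comp measurable_fst).prodMk
      ((measurable_snd.comp measurable_fst).prodMk (measurable_const.prodMk measurable_snd))
  have hD : MeasurableSet (ψ ⁻¹' C) := hψm hC
  have haeX : (fun ω => A.indicator (fun _ => (1:ℝ)) (Xt ω))
      =ᵐ[ProbabilityTheory.cond P {ω | Φ ω = φ}]
      (fun ω => (ψ ⁻¹' C).indicator (fun _ => (1:ℝ)) (W ω, μt (μv ω))) := by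
    filter_upwards [haeΦ] with ω hω
    have hmem : Xt ω ∈ A ↔ (W ω, μt (μv ω)) ∈ ψ ⁻¹' C := by
      have h0 : Xt ω ∈ A ↔ (X0 ω, fun i => ξ i ω, Φ ω, μt (μv ω)) ∈ C := by
        constructor
        · intro h
          have : ω ∈ Xt ⁻¹' A := h
          rw [← hCeq] at this; exact this
        · intro h
          have : ω ∈ (fun ω => (X0 ω, fun i => ξ i ω, Φ ω, μt (μv ω))) ⁻¹' C := h
          rw [hCeq] at this; exact this
      rw [h0]
      simp only [Set.mem_preimage, hψ_def, hW_def, hω]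
    by_cases h : Xt ω ∈ A
    · rw [Set.indicator_of_mem h, Set.indicator_of_mem (hmem.mp h)]
    · rw [Set.indicator_of_notMem h, Set.indicator_of_notMem (fun hc => h (hmem.mpr hc))]
  have hauxb := aux_condexp_mul (MeasurableSpace.comap (fun ω => μt (μv ω)) inferInstance)
    (ProbabilityTheory.cond P {ω | Φ ω = φ}) W μv μt hWm hμv hμt rfl hindWV hD hB
  have hauxa := aux_condexp_one (MeasurableSpace.comap (fun ω => μt (μv ω)) inferInstance)
    (ProbabilityTheory.cond P {ω | Φ ω = φ}) W μv μt hWm hμv hμt rfl hindWV hD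
  have e1 : (fun ω => A.indicator (fun _ => (1:ℝ)) (Xt ω) *
        B.indicator (fun _ => (1:ℝ)) (μv ω))
      =ᵐ[ProbabilityTheory.cond P {ω | Φ ω = φ}]
      (fun ω => (ψ ⁻¹' C).indicator (fun _ => (1:ℝ)) (W ω, μt (μv ω)) *
        B.indicator (fun _ => (1:ℝ)) (μv ω)) := by
    filter_upwards [haeX] with ω h
    rw [h]
  have e2 : condExp (MeasurableSpace.comap (fun ω => μt (μv ω)) inferInstance)
        (ProbabilityTheory.cond P {ω | Φ ω = φ})
        (fun ω => A.indicator (fun _ => (1:ℝ)) (Xt ω))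
      =ᵐ[ProbabilityTheory.cond P {ω | Φ ω = φ}]
      (fun ω => (((ProbabilityTheory.cond P {ω | Φ ω = φ}).map W)
          ((fun w => (w, μt (μv ω))) ⁻¹' (ψ ⁻¹' C))).toReal) :=
    (condExp_congr_ae haeX).trans hauxa.symm
  refine ((condExp_congr_ae e1).trans hauxb.symm).trans ?_
  filter_upwards [e2] with ω h
  rw [h]
end
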